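/- There is a universal constant c such that for every k ∈ ℕ and every monotone circuit C that is a d-DNNF in zero-suppressed semantics, there exists a monotone circuit C' that is a d-DNNF in zero-suppressed semantics with S(C') = {t ∈ S(C) : |t| ≤ k} and |C'| ≤ c·(k+1)²·|C|. -/

import Mathlib

/-- The type of a gate in a monotone circuit: variable gate, AND-gate, or OR-gate. -/
inductive GateType : Type
  | var
  | and
  | or
  deriving DecidableEq

/-- A monotone circuit: a finite DAG of gates with wires, a distinguished output gate,
each gate labeled as a variable gate (carrying a variable label in `ι`), an AND-gate,
or an OR-gate.  Variable gates have no inputs, and the wire relation is acyclic. -/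
structure Circuit (ι : Type) [DecidableEq ι] where
  Gate : Type
  fintypeGate : Fintype Gate
  decEqGate : DecidableEq Gate
  wire : Gate → Gate → Prop
  decWire : ∀ a b : Gate, Decidable (wire a b)
  typ : Gate → GateType
  vlab : Gate → ι
  output : Gate
  var_no_input : ∀ g g' : Gate, typ g' = GateType.var → ¬ wire g g'
  acyclic : ∀ g : Gate, ¬ Relation.TransGen wire g g

attribute [instance] Circuit.fintypeGate Circuit.decEqGate Circuit.decWire

namespace Circuit

variable {ι : Type} [DecidableEq ι]

/-- The inputs of a gate `g`: the gates with a wire to `g`. -/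
def inputs (C : Circuit ι) (g : C.Gate) : Finset C.Gate :=
  Finset.univ.filter fun g' => C.wire g' g

/-- The fan-in of a gate: its number of inputs. -/
def fanin (C : Circuit ι) (g : C.Gate) : ℕ :=
  (C.inputs g).card

/-- The gates that `g` is an input of. -/
def outs (C : Circuit ι) (g : C.Gate) : Finset C.Gate :=
  Finset.univ.filter fun g' => C.wire g g'

/-- The size of a circuit: its number of gates plus its number of wires. -/
noncomputable def size (C : Circuit ι) : ℕ :=
  Fintype.card C.Gate + {p : C.Gate × C.Gate | C.wire p.1 p.2}.ncard

/-- Zero-suppressed semantics: `Captures C g t` says that the assignment `t`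
(a finite set of variables) belongs to the set captured by gate `g`, defined bottom-up:
a variable gate captures exactly its own singleton; an AND-gate captures the unions of
assignments captured by its inputs (one from each input); an OR-gate captures the union
of the sets captured by its inputs. -/
inductive Captures (C : Circuit ι) : C.Gate → Finset ι → Prop
  | var (g : C.Gate) (h : C.typ g = GateType.var) : Captures C g {C.vlab g}
  | and (g : C.Gate) (h : C.typ g = GateType.and) (f : C.Gate → Finset ι)
      (hf : ∀ g' ∈ C.inputs g, Captures C g' (f g')) :
      Captures C g ((C.inputs g).biUnion f)
  | or (g : C.Gate) (h : C.typ g = GateType.or) (g' : C.Gate) (hg' : g' ∈ C.inputs g)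
      (t : Finset ι) (ht : Captures C g' t) : Captures C g t

/-- The set `S(g)` of assignments captured by a gate `g` in zero-suppressed semantics. -/
def S (C : Circuit ι) (g : C.Gate) : Set (Finset ι) :=
  {t | C.Captures g t}

/-- The captured set `S(C)` of the circuit: the captured set of its output gate. -/
def captured (C : Circuit ι) : Set (Finset ι) :=
  C.S C.output

/-- `C.Reaches g g'` holds when there is a (possibly empty) directed path of wires
from `g` to `g'`. -/
def Reaches (C : Circuit ι) : C.Gate → C.Gate → Prop :=
  Relation.ReflTransGen C.wire

/-- An AND-gate is decomposable if no variable gate has directed paths to two distinct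
inputs of it. -/
def DecomposableAnd (C : Circuit ι) (g : C.Gate) : Prop :=
  ∀ v g1 g2 : C.Gate, C.typ v = GateType.var → g1 ∈ C.inputs g → g2 ∈ C.inputs g →
    g1 ≠ g2 → C.Reaches v g1 → C.Reaches v g2 → False

/-- An OR-gate is deterministic if the captured sets of any two distinct inputs
are disjoint. -/
def DeterministicOr (C : Circuit ι) (g : C.Gate) : Prop :=
  ∀ g1 g2 : C.Gate, g1 ∈ C.inputs g → g2 ∈ C.inputs g → g1 ≠ g2 →
    Disjoint (C.S g1) (C.S g2)

/-- A circuit is a d-DNNF in zero-suppressed semantics if every AND-gate is decomposable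
and every OR-gate is deterministic. -/
def dDNNF (C : Circuit ι) : Prop :=
  (∀ g : C.Gate, C.typ g = GateType.and → C.DecomposableAnd g) ∧
  (∀ g : C.Gate, C.typ g = GateType.or → C.DeterministicOr g)

/-- Distinct variable gates carry distinct variable labels (i.e., variables can be
identified with variable gates, as in the paper). -/
def VarInj (C : Circuit ι) : Prop :=
  Set.InjOn C.vlab {g : C.Gate | C.typ g = GateType.var}

/-- `C` is ∅-pruned: every gate captures a nonempty set (no gate is unsatisfiable). -/
def EmptyPruned (C : Circuit ι) : Prop :=
  ∀ g : C.Gate, (C.S g).Nonempty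

/-- `C` is {}-pruned: no gate captures a set containing the empty assignment. -/
def ZeroPruned (C : Circuit ι) : Prop :=
  ∀ g : C.Gate, (∅ : Finset ι) ∉ C.S g

/-- An exit: an OR-gate having an input which is not an OR-gate. -/
def IsExit (C : Circuit ι) (g : C.Gate) : Prop :=
  C.typ g = GateType.or ∧ ∃ g' ∈ C.inputs g, C.typ g' ≠ GateType.or

/-- A normal circuit: arity-two, ∅-pruned, {}-pruned, collapsed, and discriminative. -/
def Normal (C : Circuit ι) : Prop :=
  (∀ g : C.Gate, C.fanin g ≤ 2) ∧
  C.EmptyPruned ∧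
  C.ZeroPruned ∧
  (∀ g : C.Gate, C.typ g = GateType.and → C.fanin g ≠ 1) ∧
  (∀ g : C.Gate, C.IsExit g →
    C.fanin g = 1 ∧ (C.outs g).card = 1 ∧ ∀ g' : C.Gate, C.wire g g' → C.typ g' = GateType.or)

/-- A wire both of whose endpoints are OR-gates. -/
def orWire (C : Circuit ι) (a b : C.Gate) : Prop :=
  C.wire a b ∧ C.typ a = GateType.or ∧ C.typ b = GateType.or

/-- The OR-component of an OR-gate `g`: the OR-gates connected to `g` by paths
traversing, in either direction, only wires both of whose endpoints are OR-gates. -/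
def orComponent (C : Circuit ι) (g : C.Gate) : Set C.Gate :=
  {g' : C.Gate | C.typ g' = GateType.or ∧
    Relation.ReflTransGen (fun x y => C.orWire x y ∨ C.orWire y x) g g'}

/-- The exits of an OR-gate `g`: the exits of its OR-component having a directed path
to `g` within the OR-component. -/
def exitsOf (C : Circuit ι) (g : C.Gate) : Set C.Gate :=
  {e : C.Gate | C.IsExit e ∧ Relation.ReflTransGen C.orWire e g}

/-- An OR-path of `C`: a directed path (of length at least one) all of whose
intermediate gates are OR-gates. -/
inductive OrPath (C : Circuit ι) : C.Gate → C.Gate → Prop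
  | single (a b : C.Gate) (h : C.wire a b) : OrPath C a b
  | step (a m b : C.Gate) (h : C.wire a m) (hm : C.typ m = GateType.or)
      (hp : OrPath C m b) : OrPath C a b

/-- A gate is 0-valid if it captures the empty assignment. -/
def ZeroValid (C : Circuit ι) (g : C.Gate) : Prop :=
  (∅ : Finset ι) ∈ C.S g

/-- A wire `(g, g')` is pure if `g'` is an OR-gate, or `g'` is an AND-gate all of whose
other inputs are 0-valid. -/
def PureWire (C : Circuit ι) (g g' : C.Gate) : Prop :=
  C.wire g g' ∧
    (C.typ g' = GateType.or ∨
      (C.typ g' = GateType.and ∧ ∀ h ∈ C.inputs g', h ≠ g → C.ZeroValid h))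

/-- A gate `g` is upwards-deterministic if it is unsatisfiable or there is at most one
gate `g'` such that `(g, g')` is a pure wire. -/
def UpDetGate (C : Circuit ι) (g : C.Gate) : Prop :=
  C.S g = ∅ ∨ ∀ g1 g2 : C.Gate, C.PureWire g g1 → C.PureWire g g2 → g1 = g2

/-- A circuit is upwards-deterministic if all its AND-gates and OR-gates are. -/
def UpwardsDeterministic (C : Circuit ι) : Prop :=
  ∀ g : C.Gate, (C.typ g = GateType.and ∨ C.typ g = GateType.or) → C.UpDetGate g

end Circuit

section Homogenization

open Circuit

variable {ι : Type} [DecidableEq ι]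

namespace Circuit

lemma mem_inputs_iff {C : Circuit ι} {a b : C.Gate} : a ∈ C.inputs b ↔ C.wire a b := by
  simp [Circuit.inputs]

lemma captures_var_iff {C : Circuit ι} {g : C.Gate} {t : Finset ι}
    (hg : C.typ g = GateType.var) : C.Captures g t ↔ t = {C.vlab g} := by
  constructor
  · intro h; cases h <;> simp_all
  · rintro rfl; exact Captures.var g hg

lemma captures_or_iff {C : Circuit ι} {g : C.Gate} {t : Finset ι}
    (hg : C.typ g = GateType.or) : C.Captures g t ↔ ∃ g' ∈ C.inputs g, C.Captures g' t := by
  constructor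
  · intro h
    cases h with
    | var _ h => simp_all
    | and _ h _ _ => simp_all
    | or _ h g' hg' t ht => exact ⟨g', hg', ht⟩
  · rintro ⟨g', hg', ht⟩; exact Captures.or g hg g' hg' t ht

lemma captures_and_iff {C : Circuit ι} {g : C.Gate} {t : Finset ι}
    (hg : C.typ g = GateType.and) :
    C.Captures g t ↔ ∃ f : C.Gate → Finset ι,
      (∀ g' ∈ C.inputs g, C.Captures g' (f g')) ∧ t = (C.inputs g).biUnion f := by
  constructor
  · intro h
    cases h with
    | var _ h => simp_all
    | and _ h f hf => exact ⟨f, hf, rfl⟩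
    | or _ h _ _ _ _ => simp_all
  · rintro ⟨f, hf, rfl⟩; exact Captures.and g hg f hf

lemma exists_var_of_mem_captures {C : Circuit ι} {g : C.Gate} {t : Finset ι}
    (h : C.Captures g t) :
    ∀ x ∈ t, ∃ v, C.typ v = GateType.var ∧ C.vlab v = x ∧ C.Reaches v g := by
  induction h with
  | var g hg =>
      intro x hx
      simp only [Finset.mem_singleton] at hx
      exact ⟨g, hg, hx.symm, Relation.ReflTransGen.refl⟩
  | and g hgt f hf ih =>
      intro x hx
      rw [Finset.mem_biUnion] at hx
      obtain ⟨g', hg', hxf⟩ := hx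
      obtain ⟨v, h1, h2, h3⟩ := ih g' hg' x hxf
      exact ⟨v, h1, h2, h3.tail (mem_inputs_iff.mp hg')⟩
  | or g hgt g' hg' t ht ih =>
      intro x hx
      obtain ⟨v, h1, h2, h3⟩ := ih x hx
      exact ⟨v, h1, h2, h3.tail (mem_inputs_iff.mp hg')⟩

lemma and_elem_disjoint {C : Circuit ι} (hinj : C.VarInj) (hd : C.dDNNF) {g h1 h2 : C.Gate}
    {t1 t2 : Finset ι} (hg : C.typ g = GateType.and) (m1 : h1 ∈ C.inputs g)
    (m2 : h2 ∈ C.inputs g) (hne : h1 ≠ h2) (c1 : C.Captures h1 t1) (c2 : C.Captures h2 t2)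
    {x : ι} (hx1 : x ∈ t1) (hx2 : x ∈ t2) : False := by
  obtain ⟨v1, a1, b1, r1⟩ := exists_var_of_mem_captures c1 x hx1
  obtain ⟨v2, a2, b2, r2⟩ := exists_var_of_mem_captures c2 x hx2
  have hv : v1 = v2 := hinj a1 a2 (b1.trans b2.symm)
  exact hd.1 g hg v1 h1 h2 a1 m1 m2 hne r1 (hv ▸ r2)

end Circuit

namespace Homog

variable (C : Circuit ι) (k : ℕ)

/-- The wires of `C`, as a type. -/
abbrev WT := {p : C.Gate × C.Gate // C.wire p.1 p.2}

noncomputable def idx (g : C.Gate) : ℕ := (Fintype.equivFin C.Gate g : ℕ)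

lemma idx_inj {a b : C.Gate} (h : idx C a = idx C b) : a = b :=
  (Fintype.equivFin C.Gate).injective (Fin.ext h)

lemma idx_lt (g : C.Gate) : idx C g < Fintype.card C.Gate := (Fintype.equivFin C.Gate g).isLt

def IsFirst (g h : C.Gate) : Prop :=
  h ∈ C.inputs g ∧ ∀ h' ∈ C.inputs g, idx C h ≤ idx C h'

def IsLast (g h : C.Gate) : Prop :=
  h ∈ C.inputs g ∧ ∀ h' ∈ C.inputs g, idx C h' ≤ idx C h

def IsPred (g h p : C.Gate) : Prop :=
  p ∈ C.inputs g ∧ idx C p < idx C h ∧ ∀ h' ∈ C.inputs g, idx C h' < idx C h → idx C h' ≤ idx C p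

lemma last_unique {g a b : C.Gate} (ha : IsLast C g a) (hb : IsLast C g b) : a = b :=
  idx_inj C (le_antisymm (hb.2 a ha.1) (ha.2 b hb.1))

lemma pred_unique {g h a b : C.Gate} (ha : IsPred C g h a) (hb : IsPred C g h b) : a = b :=
  idx_inj C (le_antisymm (hb.2.2 a ha.1 ha.2.1) (ha.2.2 b hb.1 hb.2.1))

lemma exists_pred_of_not_first {g h : C.Gate} (hm : h ∈ C.inputs g) (hnf : ¬ IsFirst C g h) :
    ∃ p, IsPred C g h p := by
  have hex : ∃ h' ∈ C.inputs g, idx C h' < idx C h := by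
    by_contra hc
    push_neg at hc
    exact hnf ⟨hm, fun h' hh' => hc h' hh'⟩
  obtain ⟨h0, hh0, hlt0⟩ := hex
  obtain ⟨p, hp, hmax⟩ := Finset.exists_max_image
    ((C.inputs g).filter fun x => idx C x < idx C h) (idx C) ⟨h0, by simp [hh0, hlt0]⟩
  rw [Finset.mem_filter] at hp
  exact ⟨p, hp.1, hp.2, fun h' hh' hlt' => hmax h' (Finset.mem_filter.mpr ⟨hh', hlt'⟩)⟩

lemma exists_last_of_nonempty {g : C.Gate} (hne : (C.inputs g).Nonempty) :
    ∃ p, IsLast C g p := by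
  obtain ⟨p, hp, hmax⟩ := Finset.exists_max_image (C.inputs g) (idx C) hne
  exact ⟨p, hp, hmax⟩

noncomputable def pre (g h : C.Gate) : Finset C.Gate :=
  (C.inputs g).filter fun x => idx C x ≤ idx C h

lemma mem_pre {g h x : C.Gate} : x ∈ pre C g h ↔ x ∈ C.inputs g ∧ idx C x ≤ idx C h := by
  simp [pre]

lemma pre_subset {g h : C.Gate} : pre C g h ⊆ C.inputs g := Finset.filter_subset _ _

lemma self_mem_pre {g h : C.Gate} (hm : h ∈ C.inputs g) : h ∈ pre C g h :=
  (mem_pre C).mpr ⟨hm, le_rfl⟩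

lemma pre_first {g h : C.Gate} (hf : IsFirst C g h) : pre C g h = {h} := by
  ext x
  rw [mem_pre, Finset.mem_singleton]
  constructor
  · rintro ⟨hx, hle⟩
    exact idx_inj C (le_antisymm hle (hf.2 x hx))
  · rintro rfl
    exact ⟨hf.1, le_rfl⟩

lemma pre_last {g h : C.Gate} (hl : IsLast C g h) : pre C g h = C.inputs g := by
  ext x
  rw [mem_pre]
  exact ⟨fun h => h.1, fun hx => ⟨hx, hl.2 x hx⟩⟩

lemma pre_pred_insert {g h p : C.Gate} (hm : h ∈ C.inputs g) (hp : IsPred C g h p) :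
    pre C g h = insert h (pre C g p) := by
  ext x
  rw [Finset.mem_insert, mem_pre, mem_pre]
  constructor
  · rintro ⟨hx, hle⟩
    rcases eq_or_lt_of_le hle with he | hlt
    · exact Or.inl (idx_inj C he)
    · exact Or.inr ⟨hx, hp.2.2 x hx hlt⟩
  · rintro (rfl | ⟨hx, hle⟩)
    · exact ⟨hm, le_rfl⟩
    · exact ⟨hx, le_of_lt (lt_of_le_of_lt hle hp.2.1)⟩

lemma not_mem_pre_pred {g h p : C.Gate} (hp : IsPred C g h p) : h ∉ pre C g p := by
  rw [mem_pre]
  rintro ⟨-, hle⟩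
  exact absurd hp.2.1 (not_lt.mpr hle)

open Classical in
noncomputable def predW (p : WT C) : WT C :=
  if h : ∃ q, IsPred C p.1.2 p.1.1 q then
    ⟨(h.choose, p.1.2), Circuit.mem_inputs_iff.mp h.choose_spec.1⟩
  else p

lemma predW_eq {p : WT C} {q : C.Gate} (hq : IsPred C p.1.2 p.1.1 q) :
    (predW C p).1 = (q, p.1.2) := by
  have hex : ∃ q, IsPred C p.1.2 p.1.1 q := ⟨q, hq⟩
  rw [predW, dif_pos hex]

  exact Prod.ext (pred_unique C hex.choose_spec hq) rfl

/-- The gates of the homogenized circuit. -/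
inductive Node (C : Circuit ι) (k : ℕ) : Type
  | M (g : C.Gate) (j : Fin (k + 1))
  | P (p : WT C) (j : Fin (k + 1))
  | A (p : WT C) (j1 j : Fin (k + 1))
  | O

noncomputable instance : DecidableEq (Node C k) := Classical.decEq _

def nodeEquiv : Node C k ≃
    ((C.Gate × Fin (k + 1)) ⊕ (WT C × Fin (k + 1)) ⊕ (WT C × Fin (k + 1) × Fin (k + 1)) ⊕ Unit) where
  toFun x := match x with
    | .M g j => .inl (g, j)
    | .P p j => .inr (.inl (p, j))
    | .A p j1 j => .inr (.inr (.inl (p, j1, j)))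
    | .O => .inr (.inr (.inr ()))
  invFun x := match x with
    | .inl (g, j) => .M g j
    | .inr (.inl (p, j)) => .P p j
    | .inr (.inr (.inl (p, j1, j))) => .A p j1 j
    | .inr (.inr (.inr _)) => .O
  left_inv x := by cases x <;> rfl
  right_inv x := by rcases x with ⟨g, j⟩ | ⟨p, j⟩ | ⟨p, j1, j⟩ | ⟨⟩ <;> rfl

noncomputable instance : Fintype (Node C k) := Fintype.ofEquiv _ (nodeEquiv C k).symm

lemma card_node : Fintype.card (Node C k) =
    Fintype.card C.Gate * (k + 1) + Fintype.card (WT C) * (k + 1) +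
      Fintype.card (WT C) * ((k + 1) * (k + 1)) + 1 := by
  rw [Fintype.card_congr (nodeEquiv C k)]
  simp [Fintype.card_sum, Fintype.card_prod]
  ring

/-- The wires of the homogenized circuit. -/
inductive NWire (C : Circuit ι) (k : ℕ) : Node C k → Node C k → Prop
  | orM {g' g : C.Gate} (hw : C.wire g' g) (ho : C.typ g = GateType.or) (j : Fin (k + 1)) :
      NWire C k (.M g' j) (.M g j)
  | toOut (j : Fin (k + 1)) : NWire C k (.M C.output j) .O
  | firstP (p : WT C) (ha : C.typ p.1.2 = GateType.and) (hf : IsFirst C p.1.2 p.1.1)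
      (j : Fin (k + 1)) : NWire C k (.M p.1.1 j) (.P p j)
  | mAnd (p : WT C) (ha : C.typ p.1.2 = GateType.and) (hnf : ¬ IsFirst C p.1.2 p.1.1)
      (j1 j2 j : Fin (k + 1)) (hj : (j1 : ℕ) + (j2 : ℕ) = (j : ℕ)) :
      NWire C k (.M p.1.1 j2) (.A p j1 j)
  | pAnd (p q : WT C) (ha : C.typ p.1.2 = GateType.and) (hq : IsPred C p.1.2 p.1.1 q.1.1)
      (hq2 : q.1.2 = p.1.2) (j1 j : Fin (k + 1)) (hj : (j1 : ℕ) ≤ (j : ℕ)) :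
      NWire C k (.P q j1) (.A p j1 j)
  | aP (p : WT C) (ha : C.typ p.1.2 = GateType.and) (hnf : ¬ IsFirst C p.1.2 p.1.1)
      (j1 j : Fin (k + 1)) (hj : (j1 : ℕ) ≤ (j : ℕ)) :
      NWire C k (.A p j1 j) (.P p j)
  | lastM (p : WT C) (ha : C.typ p.1.2 = GateType.and) (hl : IsLast C p.1.2 p.1.1)
      (j : Fin (k + 1)) : NWire C k (.P p j) (.M p.1.2 j)

open Classical in
noncomputable def ntyp : Node C k → GateType
  | .M g j =>
      if C.typ g = GateType.var then
        (if (j : ℕ) = 1 then GateType.var else GateType.or)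
      else if C.typ g = GateType.and ∧ C.inputs g = ∅ then
        (if (j : ℕ) = 0 then GateType.and else GateType.or)
      else GateType.or
  | .P _ _ => GateType.or
  | .A _ _ _ => GateType.and
  | .O => GateType.or

def nvlab : Node C k → ι
  | .M g _ => C.vlab g
  | .P p _ => C.vlab p.1.1
  | .A p _ _ => C.vlab p.1.1
  | .O => C.vlab C.output

/-- The number of strict ancestors of a gate. -/
noncomputable def gr (g : C.Gate) : ℕ := {g' | Relation.TransGen C.wire g' g}.ncard

lemma gr_lt {a b : C.Gate} (h : C.wire a b) : gr C a < gr C b := by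
  have hsub : {g' | Relation.TransGen C.wire g' a} ⊆ {g' | Relation.TransGen C.wire g' b} :=
    fun x hx => hx.tail h
  have hmem : a ∈ {g' | Relation.TransGen C.wire g' b} := Relation.TransGen.single h
  have hnot : a ∉ {g' | Relation.TransGen C.wire g' a} := C.acyclic a
  exact Set.ncard_lt_ncard (hsub.ssubset_of_ne (fun he => hnot (he ▸ hmem))) (Set.toFinite _)

lemma gr_le (g : C.Gate) : gr C g ≤ Fintype.card C.Gate := by
  have := Set.ncard_le_ncard (Set.subset_univ {g' | Relation.TransGen C.wire g' g})
    (Set.toFinite _)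
  simpa [Set.ncard_univ, gr] using this

noncomputable def nrank : Node C k → ℕ
  | .M g _ => (2 * Fintype.card C.Gate + 2) * gr C g + 2 * Fintype.card C.Gate + 1
  | .P p _ => (2 * Fintype.card C.Gate + 2) * gr C p.1.2 + 2 * idx C p.1.1 + 1
  | .A p _ _ => (2 * Fintype.card C.Gate + 2) * gr C p.1.2 + 2 * idx C p.1.1
  | .O => (2 * Fintype.card C.Gate + 2) * (Fintype.card C.Gate + 1) +
      2 * Fintype.card C.Gate + 1

lemma nwire_rank {x y : Node C k} (h : NWire C k x y) : nrank C k x < nrank C k y := by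
  have key : ∀ a b : C.Gate, C.wire a b →
      (2 * Fintype.card C.Gate + 2) * gr C a + (2 * Fintype.card C.Gate + 2) ≤
        (2 * Fintype.card C.Gate + 2) * gr C b := by
    intro a b hw
    have h1 : gr C a + 1 ≤ gr C b := gr_lt C hw
    calc (2 * Fintype.card C.Gate + 2) * gr C a + (2 * Fintype.card C.Gate + 2)
        = (2 * Fintype.card C.Gate + 2) * (gr C a + 1) := by ring
      _ ≤ (2 * Fintype.card C.Gate + 2) * gr C b := Nat.mul_le_mul_left _ h1
  cases h with
  | orM hw ho j =>
      have := key _ _ hw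
      simp only [nrank]
      omega
  | toOut j =>
      have h1 : gr C C.output + 1 ≤ Fintype.card C.Gate + 1 := by
        have := gr_le C C.output; omega
      have h2 : (2 * Fintype.card C.Gate + 2) * (gr C C.output + 1) ≤
          (2 * Fintype.card C.Gate + 2) * (Fintype.card C.Gate + 1) :=
        Nat.mul_le_mul_left _ h1
      simp only [nrank]
      nlinarith
  | firstP p ha hf j =>
      have := key _ _ p.2
      simp only [nrank]
      omega
  | mAnd p ha hnf j1 j2 j hj =>
      have := key _ _ p.2
      simp only [nrank]
      omega
  | pAnd p q ha hq hq2 j1 j hj =>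
      have h1 : idx C q.1.1 < idx C p.1.1 := hq.2.1
      simp only [nrank, hq2]
      omega
  | aP p ha hnf j1 j hj =>
      simp only [nrank]
      omega
  | lastM p ha hl j =>
      have := idx_lt C p.1.1
      simp only [nrank]
      omega

lemma nrank_trans {x y : Node C k} (h : Relation.TransGen (NWire C k) x y) :
    nrank C k x < nrank C k y := by
  induction h with
  | single h => exact nwire_rank C k h
  | tail _ h ih => exact ih.trans (nwire_rank C k h)

/-- The homogenized circuit. -/
@[reducible]
noncomputable def hom : Circuit ι where
  Gate := Node C k
  fintypeGate := inferInstance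
  decEqGate := Classical.decEq _
  wire := NWire C k
  decWire := fun _ _ => Classical.dec _
  typ := ntyp C k
  vlab := nvlab C k
  output := .O
  var_no_input := by
    intro x y hy hw
    cases hw with
    | orM hw ho j => simp [ntyp, ho] at hy
    | toOut j => simp [ntyp] at hy
    | firstP p ha hf j => simp [ntyp] at hy
    | mAnd p ha hnf j1 j2 j hj => simp [ntyp] at hy
    | pAnd p q ha hq hq2 j1 j hj => simp [ntyp] at hy
    | aP p ha hnf j1 j hj => simp [ntyp] at hy
    | lastM p ha hl j =>
        have hmem : p.1.1 ∈ C.inputs p.1.2 := hl.1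
        have hne : C.inputs p.1.2 ≠ ∅ := fun he => by simp [he] at hmem
        simp [ntyp, ha, hne] at hy
  acyclic := fun g h => absurd (nrank_trans C k h) (lt_irrefl _)

lemma hom_wire_iff {a b : Node C k} : (hom C k).wire a b ↔ NWire C k a b := Iff.rfl

lemma mem_hom_inputs {a b : Node C k} : a ∈ (hom C k).inputs b ↔ NWire C k a b := by
  simp [Circuit.inputs, hom]

def jsub (j1 j : Fin (k + 1)) : Fin (k + 1) :=
  ⟨(j : ℕ) - (j1 : ℕ), lt_of_le_of_lt (Nat.sub_le _ _) j.isLt⟩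

lemma wire_into_M_var {g : C.Gate} {j : Fin (k + 1)} {y : Node C k}
    (hg : C.typ g = GateType.var) : ¬ NWire C k y (.M g j) := by
  intro hw
  cases hw with
  | orM hw ho j => rw [hg] at ho; cases ho
  | lastM p ha hl j => rw [hg] at ha; cases ha

lemma wire_into_M_or {g : C.Gate} {j : Fin (k + 1)} {y : Node C k}
    (hg : C.typ g = GateType.or) :
    NWire C k y (.M g j) ↔ ∃ g', C.wire g' g ∧ y = .M g' j := by
  constructor
  · intro hw
    cases hw with
    | orM hw ho j => exact ⟨_, hw, rfl⟩
    | lastM p ha hl j => rw [hg] at ha; cases ha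
  · rintro ⟨g', hw, rfl⟩
    exact NWire.orM hw hg j

lemma wire_into_M_and {g : C.Gate} {j : Fin (k + 1)} {y : Node C k}
    (hg : C.typ g = GateType.and) :
    NWire C k y (.M g j) ↔ ∃ p : WT C, p.1.2 = g ∧ IsLast C g p.1.1 ∧ y = .P p j := by
  constructor
  · intro hw
    cases hw with
    | orM hw ho j => rw [hg] at ho; cases ho
    | lastM p ha hl j => exact ⟨p, rfl, hl, rfl⟩
  · rintro ⟨p, rfl, hl, rfl⟩
    exact NWire.lastM p hg hl j

lemma wire_into_M_and_empty {g : C.Gate} {j : Fin (k + 1)} {y : Node C k}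
    (hg : C.typ g = GateType.and) (he : C.inputs g = ∅) : ¬ NWire C k y (.M g j) := by
  rw [wire_into_M_and C k hg]
  rintro ⟨p, rfl, hl, rfl⟩
  have := hl.1
  rw [he] at this
  exact absurd this (Finset.notMem_empty _)

lemma wire_into_P_junk {p : WT C} {j : Fin (k + 1)} {y : Node C k}
    (ha : C.typ p.1.2 ≠ GateType.and) : ¬ NWire C k y (.P p j) := by
  intro hw
  cases hw with
  | firstP p ha' hf j => exact ha ha'
  | aP p ha' hnf j1 j hj => exact ha ha'

lemma wire_into_P_first {p : WT C} {j : Fin (k + 1)} {y : Node C k}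
    (ha : C.typ p.1.2 = GateType.and) (hf : IsFirst C p.1.2 p.1.1) :
    NWire C k y (.P p j) ↔ y = .M p.1.1 j := by
  constructor
  · intro hw
    cases hw with
    | firstP p ha' hf' j => rfl
    | aP p ha' hnf j1 j hj => exact absurd hf hnf
  · rintro rfl
    exact NWire.firstP p ha hf j

lemma wire_into_P_rest {p : WT C} {j : Fin (k + 1)} {y : Node C k}
    (ha : C.typ p.1.2 = GateType.and) (hnf : ¬ IsFirst C p.1.2 p.1.1) :
    NWire C k y (.P p j) ↔ ∃ j1 : Fin (k + 1), (j1 : ℕ) ≤ (j : ℕ) ∧ y = .A p j1 j := by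
  constructor
  · intro hw
    cases hw with
    | firstP p ha' hf j => exact absurd hf hnf
    | aP p ha' hnf' j1 j hj => exact ⟨j1, hj, rfl⟩
  · rintro ⟨j1, hj, rfl⟩
    exact NWire.aP p ha hnf j1 j hj

lemma wire_into_A {p : WT C} {j1 j : Fin (k + 1)} {y : Node C k}
    (ha : C.typ p.1.2 = GateType.and) (hnf : ¬ IsFirst C p.1.2 p.1.1)
    (hj : (j1 : ℕ) ≤ (j : ℕ)) :
    NWire C k y (.A p j1 j) ↔ y = .P (predW C p) j1 ∨ y = .M p.1.1 (jsub k j1 j) := by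
  have hm : p.1.1 ∈ C.inputs p.1.2 := Circuit.mem_inputs_iff.mpr p.2
  obtain ⟨q0, hq0⟩ := exists_pred_of_not_first C hm hnf
  have hpw : (predW C p).1 = (q0, p.1.2) := predW_eq C hq0
  constructor
  · intro hw
    cases hw with
    | mAnd =>
        rename_i j2' ha' hnf' hj'
        right
        have h2 : j2' = jsub k j1 j := Fin.ext (by simp only [jsub]; omega)
        rw [h2]
    | pAnd =>
        rename_i q ha' hq' hq2' hj'
        left
        have h2 : q = predW C p :=
          Subtype.ext (by rw [hpw]; exact Prod.ext (pred_unique C hq' hq0) hq2')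
        rw [h2]
  · rintro (rfl | rfl)
    · refine NWire.pAnd p (predW C p) ha ?_ ?_ j1 j hj
      · have h1 : (predW C p).1.1 = q0 := by rw [hpw]
        rw [h1]; exact hq0
      · rw [hpw]
    · exact NWire.mAnd p ha hnf j1 (jsub k j1 j) j (by simp [jsub]; omega)

lemma wire_into_A_junk {p : WT C} {j1 j : Fin (k + 1)} {y : Node C k}
    (h : ¬ (C.typ p.1.2 = GateType.and ∧ ¬ IsFirst C p.1.2 p.1.1 ∧ (j1 : ℕ) ≤ (j : ℕ))) :
    ¬ NWire C k y (.A p j1 j) := by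
  intro hw
  cases hw with
  | mAnd p ha hnf j1' j2 j' hj => exact h ⟨ha, hnf, by omega⟩
  | pAnd p q ha hq hq2 j1' j' hj =>
      refine h ⟨ha, fun hf => ?_, hj⟩
      exact absurd (hf.2 q.1.1 hq.1) (not_le.mpr hq.2.1)

lemma wire_into_O {y : Node C k} : NWire C k y .O ↔ ∃ j, y = .M C.output j := by
  constructor
  · intro hw
    cases hw with
    | toOut j => exact ⟨j, rfl⟩
  · rintro ⟨j, rfl⟩
    exact NWire.toOut j

/-- Semantics of a prefix of the inputs of an AND-gate. -/
def PCap (g h : C.Gate) (t : Finset ι) : Prop :=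
  ∃ f : C.Gate → Finset ι, (∀ h' ∈ pre C g h, C.Captures h' (f h')) ∧ t = (pre C g h).biUnion f

lemma pcap_first {g h : C.Gate} {t : Finset ι} (hf : IsFirst C g h) :
    PCap C g h t ↔ C.Captures h t := by
  rw [PCap, pre_first C hf]
  constructor
  · rintro ⟨f, hf', rfl⟩
    simpa using hf' h (Finset.mem_singleton_self h)
  · intro h'
    exact ⟨fun _ => t, by simpa using h', by simp⟩

lemma pcap_last {g h : C.Gate} {t : Finset ι} (ha : C.typ g = GateType.and)
    (hl : IsLast C g h) : PCap C g h t ↔ C.Captures g t := by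
  rw [PCap, pre_last C hl, Circuit.captures_and_iff ha]

lemma pcap_mem_support {g h : C.Gate} {t : Finset ι} (hp : PCap C g h t) {x : ι}
    (hx : x ∈ t) : ∃ h' ∈ pre C g h, ∃ v, C.typ v = GateType.var ∧ C.vlab v = x ∧
      C.Reaches v h' := by
  obtain ⟨f, hf, rfl⟩ := hp
  rw [Finset.mem_biUnion] at hx
  obtain ⟨h', hh', hxf⟩ := hx
  exact ⟨h', hh', Circuit.exists_var_of_mem_captures (hf h' hh') x hxf⟩

lemma pcap_disjoint (hinj : C.VarInj) (hd : C.dDNNF) {g h q : C.Gate} {t1 t2 : Finset ι}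
    (ha : C.typ g = GateType.and) (hq : IsPred C g h q) (hm : h ∈ C.inputs g)
    (h1 : PCap C g q t1) (h2 : C.Captures h t2) : Disjoint t1 t2 := by
  rw [Finset.disjoint_left]
  intro x hx1 hx2
  obtain ⟨f, hf, rfl⟩ := h1
  rw [Finset.mem_biUnion] at hx1
  obtain ⟨h', hh', hxf⟩ := hx1
  have hh'le : idx C h' ≤ idx C q := ((mem_pre C).mp hh').2
  have hne : h' ≠ h := fun he =>
    absurd (lt_of_le_of_lt hh'le hq.2.1) (by rw [he]; exact lt_irrefl _)
  exact Circuit.and_elem_disjoint hinj hd ha (pre_subset C hh') hm hne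
    (hf h' hh') h2 hxf hx2

lemma mem_S_iff {x : Node C k} {t : Finset ι} :
    t ∈ (hom C k).S x ↔ (hom C k).Captures x t := Iff.rfl

lemma mem_S_or {x : Node C k} (hx : ntyp C k x = GateType.or) {t : Finset ι} :
    t ∈ (hom C k).S x ↔ ∃ y, NWire C k y x ∧ t ∈ (hom C k).S y := by
  rw [mem_S_iff, Circuit.captures_or_iff hx]
  constructor
  · rintro ⟨y, hy, ht⟩; exact ⟨y, (mem_hom_inputs C k).mp hy, ht⟩
  · rintro ⟨y, hy, ht⟩; exact ⟨y, (mem_hom_inputs C k).mpr hy, ht⟩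

def specHolds : Node C k → Prop
  | .M g j => (hom C k).S (.M g j) = {t | C.Captures g t ∧ t.card = (j : ℕ)}
  | .P p j => (hom C k).S (.P p j) =
      {t | C.typ p.1.2 = GateType.and ∧ PCap C p.1.2 p.1.1 t ∧ t.card = (j : ℕ)}
  | .A p j1 j => C.typ p.1.2 = GateType.and → ¬ IsFirst C p.1.2 p.1.1 → (j1 : ℕ) ≤ (j : ℕ) →
      (hom C k).S (.A p j1 j) =
        {t | ∃ t1 t2, (PCap C p.1.2 (predW C p).1.1 t1 ∧ t1.card = (j1 : ℕ)) ∧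
          (C.Captures p.1.1 t2 ∧ t2.card = (j : ℕ) - (j1 : ℕ)) ∧ Disjoint t1 t2 ∧ t = t1 ∪ t2}
  | .O => True

lemma spec_all (hinj : C.VarInj) (hd : C.dDNNF) : ∀ x : Node C k, specHolds C k x := by
  suffices h : ∀ (N : ℕ) (x : Node C k), nrank C k x < N → specHolds C k x from
    fun x => h (nrank C k x + 1) x (Nat.lt_succ_self _)
  intro N
  induction N with
  | zero => exact fun x hx => absurd hx (Nat.not_lt_zero _)
  | succ N ih =>
    intro x hx
    have hIH : ∀ y : Node C k, NWire C k y x → specHolds C k y := fun y hy =>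
      ih y (by have := nwire_rank C k hy; omega)
    cases x with
    | O => trivial
    | M g j =>
      show (hom C k).S (.M g j) = {t | C.Captures g t ∧ t.card = (j : ℕ)}
      cases hgt : C.typ g with
      | var =>
        by_cases hj1 : (j : ℕ) = 1
        · have ht : ntyp C k (.M g j) = GateType.var := by simp [ntyp, hgt, hj1]
          ext t
          rw [mem_S_iff, Circuit.captures_var_iff ht]
          simp only [Set.mem_setOf_eq, Circuit.captures_var_iff hgt]
          constructor
          · rintro rfl
            exact ⟨rfl, by simp [hj1]⟩
          · rintro ⟨rfl, -⟩; rfl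
        · have ht : ntyp C k (.M g j) = GateType.or := by simp [ntyp, hgt, hj1]
          ext t
          rw [mem_S_or C k ht]
          simp only [Set.mem_setOf_eq]
          constructor
          · rintro ⟨y, hy, -⟩; exact absurd hy (wire_into_M_var C k hgt)
          · rintro ⟨hc, hcard⟩
            rw [Circuit.captures_var_iff hgt] at hc
            subst hc
            simp only [Finset.card_singleton] at hcard
            exact absurd hcard.symm hj1
      | or =>
        have ht : ntyp C k (.M g j) = GateType.or := by simp [ntyp, hgt]
        ext t
        rw [mem_S_or C k ht]
        simp only [Set.mem_setOf_eq]
        constructor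
        · rintro ⟨y, hy, hty⟩
          obtain ⟨g', hw, rfl⟩ := (wire_into_M_or C k hgt).mp hy
          have hs : (hom C k).S (.M g' j) = {t | C.Captures g' t ∧ t.card = (j : ℕ)} :=
            hIH _ hy
          rw [hs] at hty
          exact ⟨(Circuit.captures_or_iff hgt).mpr ⟨g', Circuit.mem_inputs_iff.mpr hw, hty.1⟩,
            hty.2⟩
        · rintro ⟨hc, hcard⟩
          rw [Circuit.captures_or_iff hgt] at hc
          obtain ⟨g', hg', hc⟩ := hc
          have hw : NWire C k (.M g' j) (.M g j) :=
            NWire.orM (Circuit.mem_inputs_iff.mp hg') hgt j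
          have hs : (hom C k).S (.M g' j) = {t | C.Captures g' t ∧ t.card = (j : ℕ)} :=
            hIH _ hw
          exact ⟨_, hw, by rw [hs]; exact ⟨hc, hcard⟩⟩
      | and =>
        by_cases he : C.inputs g = ∅
        · have hie : (hom C k).inputs (.M g j) = ∅ := by
            apply Finset.eq_empty_iff_forall_notMem.mpr
            intro y hy
            exact wire_into_M_and_empty C k hgt he ((mem_hom_inputs C k).mp hy)
          by_cases hj0 : (j : ℕ) = 0
          · have ht : ntyp C k (.M g j) = GateType.and := by simp [ntyp, hgt, he, hj0]
            ext t
            rw [mem_S_iff, Circuit.captures_and_iff ht]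
            simp only [Set.mem_setOf_eq]
            constructor
            · rintro ⟨f, -, rfl⟩
              rw [hie, Finset.biUnion_empty]
              refine ⟨(Circuit.captures_and_iff hgt).mpr ⟨fun _ => ∅, ?_, by rw [he, Finset.biUnion_empty]⟩, by simp [hj0]⟩
              intro y hy
              rw [he] at hy
              exact absurd hy (Finset.notMem_empty y)
            · rintro ⟨hc, -⟩
              rw [Circuit.captures_and_iff hgt] at hc
              obtain ⟨f, -, rfl⟩ := hc
              rw [he, Finset.biUnion_empty]
              refine ⟨fun _ => ∅, ?_, by rw [hie, Finset.biUnion_empty]⟩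
              intro y hy
              rw [hie] at hy
              exact absurd hy (Finset.notMem_empty y)
          · have ht : ntyp C k (.M g j) = GateType.or := by simp [ntyp, hgt, he, hj0]
            ext t
            rw [mem_S_or C k ht]
            simp only [Set.mem_setOf_eq]
            constructor
            · rintro ⟨y, hy, -⟩; exact absurd hy (wire_into_M_and_empty C k hgt he)
            · rintro ⟨hc, hcard⟩
              rw [Circuit.captures_and_iff hgt] at hc
              obtain ⟨f, -, rfl⟩ := hc
              rw [he] at hcard
              simp only [Finset.biUnion_empty, Finset.card_empty] at hcard
              exact absurd hcard.symm hj0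
        · have ht : ntyp C k (.M g j) = GateType.or := by simp [ntyp, hgt, he]
          obtain ⟨h0, hl0⟩ := exists_last_of_nonempty C (Finset.nonempty_iff_ne_empty.mpr he)
          ext t
          rw [mem_S_or C k ht]
          simp only [Set.mem_setOf_eq]
          constructor
          · rintro ⟨y, hy, hty⟩
            obtain ⟨p, hp2, hl, rfl⟩ := (wire_into_M_and C k hgt).mp hy
            have hs : (hom C k).S (.P p j) = {t | C.typ p.1.2 = GateType.and ∧
                PCap C p.1.2 p.1.1 t ∧ t.card = (j : ℕ)} := hIH _ hy
            rw [hs] at hty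
            obtain ⟨-, hpc, hcard⟩ := hty
            rw [hp2] at hpc
            exact ⟨(pcap_last C hgt hl).mp hpc, hcard⟩
          · rintro ⟨hc, hcard⟩
            have hw : NWire C k (.P ⟨(h0, g), Circuit.mem_inputs_iff.mp hl0.1⟩ j) (.M g j) :=
              NWire.lastM ⟨(h0, g), Circuit.mem_inputs_iff.mp hl0.1⟩ hgt hl0 j
            have hs : (hom C k).S (.P ⟨(h0, g), Circuit.mem_inputs_iff.mp hl0.1⟩ j) =
                {t | C.typ g = GateType.and ∧ PCap C g h0 t ∧ t.card = (j : ℕ)} := hIH _ hw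
            refine ⟨_, hw, ?_⟩
            rw [hs]
            exact ⟨hgt, (pcap_last C hgt hl0).mpr hc, hcard⟩
    | P p j =>
      show (hom C k).S (.P p j) =
        {t | C.typ p.1.2 = GateType.and ∧ PCap C p.1.2 p.1.1 t ∧ t.card = (j : ℕ)}
      have ht : ntyp C k (.P p j) = GateType.or := rfl
      by_cases ha : C.typ p.1.2 = GateType.and
      · have hm : p.1.1 ∈ C.inputs p.1.2 := Circuit.mem_inputs_iff.mpr p.2
        by_cases hf : IsFirst C p.1.2 p.1.1
        · ext t
          rw [mem_S_or C k ht]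
          simp only [Set.mem_setOf_eq]
          have hs : (hom C k).S (.M p.1.1 j) =
              {t | C.Captures p.1.1 t ∧ t.card = (j : ℕ)} := hIH _ (NWire.firstP p ha hf j)
          constructor
          · rintro ⟨y, hy, hty⟩
            rw [wire_into_P_first C k ha hf] at hy
            subst hy
            rw [hs] at hty
            exact ⟨ha, (pcap_first C hf).mpr hty.1, hty.2⟩
          · rintro ⟨-, hpc, hcard⟩
            exact ⟨_, NWire.firstP p ha hf j,
              by rw [hs]; exact ⟨(pcap_first C hf).mp hpc, hcard⟩⟩
        · obtain ⟨q0, hq0⟩ := exists_pred_of_not_first C hm hf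
          have hpw : (predW C p).1 = (q0, p.1.2) := predW_eq C hq0
          have hq1 : (predW C p).1.1 = q0 := by rw [hpw]
          ext t
          rw [mem_S_or C k ht]
          simp only [Set.mem_setOf_eq]
          constructor
          · rintro ⟨y, hy, hty⟩
            rw [wire_into_P_rest C k ha hf] at hy
            obtain ⟨j1, hj1, rfl⟩ := hy
            have hs := hIH _ (NWire.aP p ha hf j1 j hj1) ha hf hj1
            rw [hs] at hty
            obtain ⟨t1, t2, ⟨hpc1, hc1⟩, ⟨hcap2, hc2⟩, hdisj, rfl⟩ := hty
            rw [hq1] at hpc1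
            obtain ⟨f, hfc, rfl⟩ := hpc1
            refine ⟨ha, ⟨Function.update f p.1.1 t2, ?_, ?_⟩, ?_⟩
            · intro h' hh'
              rw [pre_pred_insert C hm hq0, Finset.mem_insert] at hh'
              rcases hh' with rfl | hh'
              · rw [Function.update_self]; exact hcap2
              · rw [Function.update_of_ne (by rintro rfl; exact not_mem_pre_pred C hq0 hh')]
                exact hfc h' hh'
            · rw [pre_pred_insert C hm hq0, Finset.biUnion_insert, Function.update_self,
                Finset.union_comm]
              congr 1
              refine Finset.biUnion_congr rfl ?_
              intro h' hh'
              rw [Function.update_of_ne (by rintro rfl; exact not_mem_pre_pred C hq0 hh')]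
            · rw [Finset.card_union_of_disjoint hdisj, hc1, hc2]
              omega
          · rintro ⟨-, ⟨f, hfc, rfl⟩, hcard⟩
            have hins := pre_pred_insert C hm hq0
            have hsplit : (pre C p.1.2 p.1.1).biUnion f =
                (pre C p.1.2 q0).biUnion f ∪ f p.1.1 := by
              rw [hins, Finset.biUnion_insert, Finset.union_comm]
            have hpc1 : PCap C p.1.2 q0 ((pre C p.1.2 q0).biUnion f) :=
              ⟨f, fun h' hh' => hfc h' (by rw [hins]; exact Finset.mem_insert_of_mem hh'), rfl⟩
            have hcap2 : C.Captures p.1.1 (f p.1.1) := hfc p.1.1 (self_mem_pre C hm)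
            have hdisj : Disjoint ((pre C p.1.2 q0).biUnion f) (f p.1.1) :=
              pcap_disjoint C hinj hd ha hq0 hm hpc1 hcap2
            have hcards : ((pre C p.1.2 q0).biUnion f).card + (f p.1.1).card = (j : ℕ) := by
              rw [← Finset.card_union_of_disjoint hdisj, ← hsplit]
              exact hcard
            have hlt : ((pre C p.1.2 q0).biUnion f).card < k + 1 := by
              have := j.isLt; omega
            have hle : ((⟨((pre C p.1.2 q0).biUnion f).card, hlt⟩ : Fin (k + 1)) : ℕ) ≤ (j : ℕ) := by
              show ((pre C p.1.2 q0).biUnion f).card ≤ (j : ℕ)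
              omega
            have hwj := NWire.aP p ha hf ⟨((pre C p.1.2 q0).biUnion f).card, hlt⟩ j hle
            have hs := hIH _ hwj ha hf hle
            refine ⟨_, hwj, ?_⟩
            rw [hs]
            refine ⟨(pre C p.1.2 q0).biUnion f, f p.1.1, ⟨by rw [hq1]; exact hpc1, rfl⟩,
              ⟨hcap2, ?_⟩, hdisj, hsplit⟩
            show (f p.1.1).card = (j : ℕ) - ((pre C p.1.2 q0).biUnion f).card
            omega
      · ext t
        rw [mem_S_or C k ht]
        simp only [Set.mem_setOf_eq]
        constructor
        · rintro ⟨y, hy, -⟩; exact absurd hy (wire_into_P_junk C k ha)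
        · rintro ⟨ha', -, -⟩; exact absurd ha' ha
    | A p j1 j =>
      intro ha hnf hj
      have hm : p.1.1 ∈ C.inputs p.1.2 := Circuit.mem_inputs_iff.mpr p.2
      obtain ⟨q0, hq0⟩ := exists_pred_of_not_first C hm hnf
      have hpw : (predW C p).1 = (q0, p.1.2) := predW_eq C hq0
      have hq1 : (predW C p).1.1 = q0 := by rw [hpw]
      have hq2 : (predW C p).1.2 = p.1.2 := by rw [hpw]
      have hwa : NWire C k (.P (predW C p) j1) (.A p j1 j) :=
        (wire_into_A C k ha hnf hj).mpr (Or.inl rfl)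
      have hwb : NWire C k (.M p.1.1 (jsub k j1 j)) (.A p j1 j) :=
        (wire_into_A C k ha hnf hj).mpr (Or.inr rfl)
      have hsa : (hom C k).S (.P (predW C p) j1) = {t | C.typ (predW C p).1.2 = GateType.and ∧
          PCap C (predW C p).1.2 (predW C p).1.1 t ∧ t.card = (j1 : ℕ)} := hIH _ hwa
      have hsb : (hom C k).S (.M p.1.1 (jsub k j1 j)) =
          {t | C.Captures p.1.1 t ∧ t.card = ((jsub k j1 j : Fin (k + 1)) : ℕ)} := hIH _ hwb
      rw [hq2] at hsa
      have hqp : IsPred C p.1.2 p.1.1 ((predW C p).1.1) := by rw [hq1]; exact hq0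
      have hiA : (hom C k).inputs (.A p j1 j) =
          {(.P (predW C p) j1 : Node C k), .M p.1.1 (jsub k j1 j)} := by
        ext y
        rw [mem_hom_inputs, wire_into_A C k ha hnf hj, Finset.mem_insert, Finset.mem_singleton]
      have hnab : (.P (predW C p) j1 : Node C k) ≠ .M p.1.1 (jsub k j1 j) := by
        intro h; cases h
      ext t
      rw [mem_S_iff, Circuit.captures_and_iff (rfl : ntyp C k (.A p j1 j) = GateType.and)]
      simp only [hiA, Set.mem_setOf_eq]
      constructor
      · rintro ⟨f, hfc, rfl⟩
        have h1 : f (.P (predW C p) j1) ∈ (hom C k).S (.P (predW C p) j1) :=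
          hfc _ (Finset.mem_insert_self _ _)
        rw [hsa] at h1
        have h2 : f (.M p.1.1 (jsub k j1 j)) ∈ (hom C k).S (.M p.1.1 (jsub k j1 j)) :=
          hfc _ (Finset.mem_insert_of_mem (Finset.mem_singleton_self _))
        rw [hsb] at h2
        refine ⟨f (.P (predW C p) j1), f (.M p.1.1 (jsub k j1 j)),
          ⟨h1.2.1, h1.2.2⟩, ⟨h2.1, h2.2⟩, ?_, ?_⟩
        · exact pcap_disjoint C hinj hd ha hqp hm h1.2.1 h2.1
        · rw [Finset.biUnion_insert, Finset.singleton_biUnion]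
      · rintro ⟨t1, t2, ⟨hpc1, hc1⟩, ⟨hcap2, hc2⟩, hdisj, rfl⟩
        classical
        have hm1 : (hom C k).Captures (.P (predW C p) j1) t1 := by
          show t1 ∈ (hom C k).S (.P (predW C p) j1)
          rw [hsa]
          exact ⟨ha, hpc1, hc1⟩
        have hm2 : (hom C k).Captures (.M p.1.1 (jsub k j1 j)) t2 := by
          show t2 ∈ (hom C k).S (.M p.1.1 (jsub k j1 j))
          rw [hsb]
          exact ⟨hcap2, hc2⟩
        refine ⟨fun y => if y = (.P (predW C p) j1 : Node C k) then t1 else t2, ?_, ?_⟩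
        · intro y hy
          rcases Finset.mem_insert.mp hy with rfl | hy
          · simpa using hm1
          · rw [Finset.mem_singleton] at hy
            subst hy
            simpa [Ne.symm hnab] using hm2
        · rw [Finset.biUnion_insert, Finset.singleton_biUnion]
          simp [Ne.symm hnab]

def GoodAt (v : C.Gate) : Node C k → Prop
  | .M g _ => C.Reaches v g
  | .P p _ => ∃ h' ∈ pre C p.1.2 p.1.1, C.Reaches v h'
  | .A p _ _ => ∃ h' ∈ pre C p.1.2 p.1.1, C.Reaches v h'
  | .O => C.Reaches v C.output

lemma good_step {v : C.Gate} {a b : Node C k} (hw : NWire C k a b) (hg : GoodAt C k v a) :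
    GoodAt C k v b := by
  cases hw with
  | orM hw ho j => exact Relation.ReflTransGen.tail hg hw
  | toOut j => exact hg
  | firstP p ha hf j => exact ⟨p.1.1, self_mem_pre C hf.1, hg⟩
  | mAnd p ha hnf j1 j2 j hj =>
      exact ⟨p.1.1, self_mem_pre C (Circuit.mem_inputs_iff.mpr p.2), hg⟩
  | pAnd p q ha hq hq2 j1 j hj =>
      obtain ⟨h', hh', hr⟩ := hg
      rw [hq2] at hh'
      rw [mem_pre] at hh'
      exact ⟨h', (mem_pre C).mpr ⟨hh'.1, le_trans hh'.2 (le_of_lt hq.2.1)⟩, hr⟩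
  | aP p ha hnf j1 j hj => exact hg
  | lastM p ha hl j =>
      obtain ⟨h', hh', hr⟩ := hg
      exact Relation.ReflTransGen.tail hr (Circuit.mem_inputs_iff.mp (pre_subset C hh'))

lemma good_reach {v : C.Gate} {x y : Node C k} (h : Relation.ReflTransGen (NWire C k) x y)
    (hg : GoodAt C k v x) : GoodAt C k v y := by
  induction h with
  | refl => exact hg
  | tail _ hw ih => exact good_step C k hw ih

lemma ntyp_var_elim {x : Node C k} (hx : ntyp C k x = GateType.var) :
    ∃ (v : C.Gate) (jv : Fin (k + 1)), x = .M v jv ∧ C.typ v = GateType.var ∧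
      (jv : ℕ) = 1 := by
  cases x with
  | M g j =>
      rw [ntyp] at hx
      split_ifs at hx with h1 h2 h3 h4 <;>
        first
          | exact ⟨g, j, rfl, h1, h2⟩
          | exact absurd hx (by simp)
  | P p j => rw [ntyp] at hx; exact absurd hx (by simp)
  | A p j1 j => rw [ntyp] at hx; exact absurd hx (by simp)
  | O => rw [ntyp] at hx; exact absurd hx (by simp)

lemma ntyp_M_and_elim {g : C.Gate} {j : Fin (k + 1)}
    (hx : ntyp C k (.M g j) = GateType.and) :
    C.typ g = GateType.and ∧ C.inputs g = ∅ := by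
  rw [ntyp] at hx
  split_ifs at hx with h1 h2 h3 h4 <;>
    first
      | exact h3
      | exact absurd hx (by simp)

lemma hom_decomposable (hinj : C.VarInj) (hd : C.dDNNF) (x : Node C k)
    (hx : ntyp C k x = GateType.and) : (hom C k).DecomposableAnd x := by
  cases x with
  | P p j => rw [ntyp] at hx; exact absurd hx (by simp)
  | O => rw [ntyp] at hx; exact absurd hx (by simp)
  | M g j =>
      obtain ⟨hgt, he⟩ := ntyp_M_and_elim C k hx
      intro v g1 g2 hv h1 h2 hne r1 r2
      exact wire_into_M_and_empty C k hgt he ((mem_hom_inputs C k).mp h1)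
  | A p j1 j =>
      intro v y1 y2 hv h1 h2 hne r1 r2
      by_cases hok : C.typ p.1.2 = GateType.and ∧ ¬ IsFirst C p.1.2 p.1.1 ∧
          (j1 : ℕ) ≤ (j : ℕ)
      · obtain ⟨ha, hnf, hj⟩ := hok
        have hw1 := (mem_hom_inputs C k).mp h1
        have hw2 := (mem_hom_inputs C k).mp h2
        rw [wire_into_A C k ha hnf hj] at hw1 hw2
        obtain ⟨v0, jv, rfl, hv0, -⟩ := ntyp_var_elim C k hv
        have hg1 : GoodAt C k v0 y1 := good_reach C k r1 Relation.ReflTransGen.refl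
        have hg2 : GoodAt C k v0 y2 := good_reach C k r2 Relation.ReflTransGen.refl
        have hm : p.1.1 ∈ C.inputs p.1.2 := Circuit.mem_inputs_iff.mpr p.2
        obtain ⟨q0, hq0⟩ := exists_pred_of_not_first C hm hnf
        have hpw : (predW C p).1 = (q0, p.1.2) := predW_eq C hq0
        have e1 : (predW C p).1.1 = q0 := by rw [hpw]
        have e2 : (predW C p).1.2 = p.1.2 := by rw [hpw]
        have key : ∀ z1 z2 : Node C k, z1 = .P (predW C p) j1 →
            z2 = .M p.1.1 (jsub k j1 j) → GoodAt C k v0 z1 → GoodAt C k v0 z2 → False := by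
          rintro z1 z2 rfl rfl hga hgb
          obtain ⟨h', hh', hr⟩ := hga
          rw [e2, e1] at hh'
          rw [mem_pre] at hh'
          have hne' : h' ≠ p.1.1 := by
            intro hee
            rw [hee] at hh'
            exact absurd (lt_of_le_of_lt hh'.2 hq0.2.1) (lt_irrefl _)
          exact hd.1 p.1.2 ha v0 h' p.1.1 hv0 hh'.1 hm hne' hr hgb
        rcases hw1 with rfl | rfl <;> rcases hw2 with rfl | rfl
        · exact hne rfl
        · exact key _ _ rfl rfl hg1 hg2
        · exact key _ _ rfl rfl hg2 hg1
        · exact hne rfl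
      · exact wire_into_A_junk C k hok ((mem_hom_inputs C k).mp h1)

lemma hom_deterministic (hinj : C.VarInj) (hd : C.dDNNF) (x : Node C k)
    (hx : ntyp C k x = GateType.or) : (hom C k).DeterministicOr x := by
  intro y1 y2 h1 h2 hne
  have hw1 := (mem_hom_inputs C k).mp h1
  have hw2 := (mem_hom_inputs C k).mp h2
  cases x with
  | A p j1 j => rw [ntyp] at hx; exact absurd hx (by simp)
  | O =>
      obtain ⟨ja, rfl⟩ := (wire_into_O C k).mp hw1
      obtain ⟨jb, rfl⟩ := (wire_into_O C k).mp hw2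
      have hsa : (hom C k).S (.M C.output ja) =
          {t | C.Captures C.output t ∧ t.card = (ja : ℕ)} :=
        spec_all C k hinj hd (.M C.output ja)
      have hsb : (hom C k).S (.M C.output jb) =
          {t | C.Captures C.output t ∧ t.card = (jb : ℕ)} :=
        spec_all C k hinj hd (.M C.output jb)
      rw [Set.disjoint_left, hsa, hsb]
      rintro t ⟨-, hca⟩ ⟨-, hcb⟩
      exact hne (by rw [Fin.ext (hca.symm.trans hcb : (ja : ℕ) = (jb : ℕ))])
  | M g j =>
      cases hgt : C.typ g with
      | var => exact absurd hw1 (wire_into_M_var C k hgt)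
      | or =>
          obtain ⟨g1, hwg1, rfl⟩ := (wire_into_M_or C k hgt).mp hw1
          obtain ⟨g2, hwg2, rfl⟩ := (wire_into_M_or C k hgt).mp hw2
          have hgne : g1 ≠ g2 := fun hee => hne (by rw [hee])
          have hsa : (hom C k).S (.M g1 j) = {t | C.Captures g1 t ∧ t.card = (j : ℕ)} :=
            spec_all C k hinj hd (.M g1 j)
          have hsb : (hom C k).S (.M g2 j) = {t | C.Captures g2 t ∧ t.card = (j : ℕ)} :=
            spec_all C k hinj hd (.M g2 j)
          rw [Set.disjoint_left, hsa, hsb]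
          rintro t ⟨hca, -⟩ ⟨hcb, -⟩
          exact Set.disjoint_left.mp
            (hd.2 g hgt g1 g2 (Circuit.mem_inputs_iff.mpr hwg1)
              (Circuit.mem_inputs_iff.mpr hwg2) hgne) hca hcb
      | and =>
          obtain ⟨p1, e1, hl1, rfl⟩ := (wire_into_M_and C k hgt).mp hw1
          obtain ⟨p2, e2, hl2, rfl⟩ := (wire_into_M_and C k hgt).mp hw2
          have : p1 = p2 :=
            Subtype.ext (Prod.ext (last_unique C hl1 hl2) (e1.trans e2.symm))
          exact absurd (by rw [this]) hne
  | P p j =>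
      by_cases ha : C.typ p.1.2 = GateType.and
      · have hm : p.1.1 ∈ C.inputs p.1.2 := Circuit.mem_inputs_iff.mpr p.2
        by_cases hf : IsFirst C p.1.2 p.1.1
        · rw [wire_into_P_first C k ha hf] at hw1 hw2
          exact absurd (hw1.trans hw2.symm) hne
        · obtain ⟨q0, hq0⟩ := exists_pred_of_not_first C hm hf
          have hpw : (predW C p).1 = (q0, p.1.2) := predW_eq C hq0
          have eq1 : (predW C p).1.1 = q0 := by rw [hpw]
          obtain ⟨ja, hja, rfl⟩ := (wire_into_P_rest C k ha hf).mp hw1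
          obtain ⟨jb, hjb, rfl⟩ := (wire_into_P_rest C k ha hf).mp hw2
          have hjne : ja ≠ jb := fun hee => hne (by rw [hee])
          have hsa := spec_all C k hinj hd (.A p ja j) ha hf hja
          have hsb := spec_all C k hinj hd (.A p jb j) ha hf hjb
          rw [Set.disjoint_left, hsa, hsb]
          rintro t ⟨t1, t2, ⟨hpc1, hc1⟩, ⟨hcap2, hc2⟩, hdisj, rfl⟩
            ⟨t1', t2', ⟨hpc1', hc1'⟩, ⟨hcap2', hc2'⟩, hdisj', heq⟩
          have key : ∀ u1 u2 : Finset ι, PCap C p.1.2 ((predW C p).1.1) u1 →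
              C.Captures p.1.1 u2 → t1 ∪ t2 = u1 ∪ u2 → ∀ x, x ∈ u2 ↔
                x ∈ t1 ∪ t2 ∧ ∃ v, C.typ v = GateType.var ∧ C.vlab v = x ∧
                  C.Reaches v p.1.1 := by
            intro u1 u2 hp hc hu x
            constructor
            · intro hx2
              refine ⟨by rw [hu]; exact Finset.mem_union_right _ hx2, ?_⟩
              exact Circuit.exists_var_of_mem_captures hc x hx2
            · rintro ⟨hxt, v, hv, hvl, hvr⟩
              rw [hu] at hxt
              rcases Finset.mem_union.mp hxt with hx1 | hx2
              · exfalso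
                obtain ⟨h', hh', v', hv', hvl', hvr'⟩ := pcap_mem_support C hp hx1
                rw [eq1, mem_pre] at hh'
                have hne' : h' ≠ p.1.1 := by
                  intro hee
                  rw [hee] at hh'
                  exact absurd (lt_of_le_of_lt hh'.2 hq0.2.1) (lt_irrefl _)
                have hvv : v' = v := hinj hv' hv (hvl'.trans hvl.symm)
                exact hd.1 p.1.2 ha v h' p.1.1 hv hh'.1 hm hne' (hvv ▸ hvr') hvr
              · exact hx2
          have ht2 : t2 = t2' := by
            ext x
            rw [key t1 t2 hpc1 hcap2 rfl x, key t1' t2' hpc1' hcap2' heq x]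
          have : (ja : ℕ) = (jb : ℕ) := by
            have h1' : t2.card = (j : ℕ) - (ja : ℕ) := hc2
            have h2' : t2.card = (j : ℕ) - (jb : ℕ) := by rw [ht2]; exact hc2'
            omega
          exact hjne (Fin.ext this)
      · exact absurd hw1 (wire_into_P_junk C k ha)

lemma hom_ddnnf (hinj : C.VarInj) (hd : C.dDNNF) : (hom C k).dDNNF :=
  ⟨fun g hg => hom_decomposable C k hinj hd g hg,
   fun g hg => hom_deterministic C k hinj hd g hg⟩

lemma hom_varinj (hinj : C.VarInj) : (hom C k).VarInj := by
  intro x hx y hy hxy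
  obtain ⟨v1, jv1, rfl, hv1, e1⟩ := ntyp_var_elim C k hx
  obtain ⟨v2, jv2, rfl, hv2, e2⟩ := ntyp_var_elim C k hy
  have hvv : v1 = v2 := hinj hv1 hv2 hxy
  have hjj : jv1 = jv2 := Fin.ext (e1.trans e2.symm)
  rw [hvv, hjj]

lemma hom_captured (hinj : C.VarInj) (hd : C.dDNNF) :
    (hom C k).captured = {t ∈ C.captured | t.card ≤ k} := by
  ext t
  have hO : t ∈ (hom C k).S (.O : Node C k) ↔
      ∃ y, NWire C k y .O ∧ t ∈ (hom C k).S y := mem_S_or C k (x := .O) rfl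
  constructor
  · intro ht
    obtain ⟨y, hy, hty⟩ := hO.mp ht
    obtain ⟨jt, rfl⟩ := (wire_into_O C k).mp hy
    have hs : (hom C k).S (.M C.output jt) =
        {t | C.Captures C.output t ∧ t.card = (jt : ℕ)} :=
      spec_all C k hinj hd (.M C.output jt)
    rw [hs] at hty
    obtain ⟨hc1, hc2⟩ := hty
    have := jt.isLt
    exact ⟨hc1, by omega⟩
  · rintro ⟨hc, hcard⟩
    apply hO.mpr
    have hlt : t.card < k + 1 := by omega
    refine ⟨.M C.output ⟨t.card, hlt⟩, NWire.toOut _, ?_⟩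
    have hs : (hom C k).S (.M C.output ⟨t.card, hlt⟩) =
        {t' | C.Captures C.output t' ∧ t'.card = ((⟨t.card, hlt⟩ : Fin (k + 1)) : ℕ)} :=
      spec_all C k hinj hd (.M C.output ⟨t.card, hlt⟩)
    rw [hs]
    exact ⟨hc, rfl⟩

abbrev Dsc :=
  (WT C × Fin (k + 1)) ⊕ (Fin (k + 1)) ⊕ (WT C × Fin (k + 1)) ⊕
    (WT C × Fin (k + 1) × Fin (k + 1)) ⊕ (WT C × Fin (k + 1) × Fin (k + 1)) ⊕
    (WT C × Fin (k + 1) × Fin (k + 1)) ⊕ (WT C × Fin (k + 1))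

noncomputable def cover : Dsc C k → Node C k × Node C k
  | .inl (p, j) => (.M p.1.1 j, .M p.1.2 j)
  | .inr (.inl j) => (.M C.output j, .O)
  | .inr (.inr (.inl (p, j))) => (.M p.1.1 j, .P p j)
  | .inr (.inr (.inr (.inl (p, j1, j)))) => (.M p.1.1 (jsub k j1 j), .A p j1 j)
  | .inr (.inr (.inr (.inr (.inl (p, j1, j))))) => (.P (predW C p) j1, .A p j1 j)
  | .inr (.inr (.inr (.inr (.inr (.inl (p, j1, j)))))) => (.A p j1 j, .P p j)
  | .inr (.inr (.inr (.inr (.inr (.inr (p, j)))))) => (.P p j, .M p.1.2 j)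

lemma wire_sub_range :
    {q : Node C k × Node C k | NWire C k q.1 q.2} ⊆ Set.range (cover C k) := by
  rintro ⟨a, b⟩ hw
  simp only [Set.mem_setOf_eq] at hw
  cases hw with
  | orM hw ho j =>
      rename_i g' g
      exact ⟨.inl (⟨(g', g), hw⟩, j), rfl⟩
  | toOut j => exact ⟨.inr (.inl j), rfl⟩
  | firstP p ha hf j => exact ⟨.inr (.inr (.inl (p, j))), rfl⟩
  | mAnd p ha hnf j1 j2 j hj =>
      refine ⟨.inr (.inr (.inr (.inl (p, j1, j)))), ?_⟩
      have hj2 : jsub k j1 j = j2 := Fin.ext (by simp only [jsub]; omega)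
      show (Node.M p.1.1 (jsub k j1 j), Node.A p j1 j) = _
      rw [hj2]
  | pAnd p q ha hq hq2 j1 j hj =>
      refine ⟨.inr (.inr (.inr (.inr (.inl (p, j1, j))))), ?_⟩
      have hqq : predW C p = q := Subtype.ext (by rw [predW_eq C hq]; exact Prod.ext rfl hq2.symm)
      show (Node.P (predW C p) j1, Node.A p j1 j) = _
      rw [hqq]
  | aP p ha hnf j1 j hj => exact ⟨.inr (.inr (.inr (.inr (.inr (.inl (p, j1, j)))))), rfl⟩
  | lastM p ha hl j => exact ⟨.inr (.inr (.inr (.inr (.inr (.inr (p, j)))))), rfl⟩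

lemma wires_card_le :
    {q : Node C k × Node C k | NWire C k q.1 q.2}.ncard ≤ Fintype.card (Dsc C k) := by
  have h1 := Set.ncard_le_ncard (wire_sub_range C k) (Set.toFinite _)
  have h2 : (Set.range (cover C k)).ncard ≤ Fintype.card (Dsc C k) := by
    rw [← Set.image_univ]
    refine le_trans (Set.ncard_image_le (Set.toFinite _)) ?_
    rw [Set.ncard_univ, Nat.card_eq_fintype_card]
  exact h1.trans h2

lemma card_dsc : Fintype.card (Dsc C k) =
    3 * (Fintype.card (WT C) * (k + 1)) + (k + 1) +
      3 * (Fintype.card (WT C) * ((k + 1) * (k + 1))) := by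
  simp [Fintype.card_sum, Fintype.card_prod]
  ring

lemma wt_card : Fintype.card (WT C) = {p : C.Gate × C.Gate | C.wire p.1 p.2}.ncard := by
  have h1 : {p : C.Gate × C.Gate | C.wire p.1 p.2}.ncard =
      Nat.card {p : C.Gate × C.Gate // C.wire p.1 p.2} := by
    rw [← Nat.card_coe_set_eq]
    rfl
  rw [h1, Nat.card_eq_fintype_card]

lemma hom_size : (hom C k).size ≤ 100 * (k + 1) ^ 2 * C.size := by
  have hn : 1 ≤ Fintype.card C.Gate := Fintype.card_pos_iff.mpr ⟨C.output⟩
  have hsz : (hom C k).size = Fintype.card (Node C k) +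
      {q : Node C k × Node C k | NWire C k q.1 q.2}.ncard := rfl
  have hszC : C.size = Fintype.card C.Gate +
      {p : C.Gate × C.Gate | C.wire p.1 p.2}.ncard := rfl
  have hW := wt_card C
  have h1 := card_node C k
  have h2 := (wires_card_le C k).trans_eq (card_dsc C k)
  have hKK : k + 1 ≤ (k + 1) * (k + 1) := Nat.le_mul_of_pos_left _ (by omega)
  rw [hsz, hszC, ← hW, h1, pow_two]
  refine le_trans (Nat.add_le_add_left h2 _) ?_
  have e1 : Fintype.card C.Gate * (k + 1) ≤ Fintype.card C.Gate * ((k + 1) * (k + 1)) :=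
    Nat.mul_le_mul_left _ hKK
  have e2 : Fintype.card (WT C) * (k + 1) ≤ Fintype.card (WT C) * ((k + 1) * (k + 1)) :=
    Nat.mul_le_mul_left _ hKK
  have e3 : 1 ≤ (k + 1) * (k + 1) := by nlinarith
  have hnk : (k + 1) * (k + 1) ≤ Fintype.card C.Gate * ((k + 1) * (k + 1)) :=
    Nat.le_mul_of_pos_left _ (by omega)
  have hexp : 100 * ((k + 1) * (k + 1)) * (Fintype.card C.Gate + Fintype.card (WT C)) =
      100 * (Fintype.card C.Gate * ((k + 1) * (k + 1))) +
        100 * (Fintype.card (WT C) * ((k + 1) * (k + 1))) := by ring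
  rw [hexp]
  omega
end Homog

end Homogenization


/-- Homogenization: there is a universal constant `c` such that for every `k ∈ ℕ` and
every monotone circuit `C` that is a d-DNNF in zero-suppressed semantics, there exists a
monotone circuit `C'` that is a d-DNNF in zero-suppressed semantics with
`S(C') = {t ∈ S(C) : |t| ≤ k}` and `|C'| ≤ c·(k+1)²·|C|`. -/
theorem stmt4 :
    ∃ c : ℕ, 0 < c ∧
      ∀ (ι : Type) [DecidableEq ι] (k : ℕ) (C : Circuit ι),
        C.VarInj → C.dDNNF →
        ∃ C' : Circuit ι,
          C'.VarInj ∧ C'.dDNNF ∧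
          C'.captured = {t ∈ C.captured | t.card ≤ k} ∧
          C'.size ≤ c * (k + 1) ^ 2 * C.size := by
  refine ⟨100, by norm_num, ?_⟩
  intro ι _ k C hinj hd
  exact ⟨Homog.hom C k, Homog.hom_varinj C k hinj, Homog.hom_ddnnf C k hinj hd,
    Homog.hom_captured C k hinj hd, Homog.hom_size C k⟩
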